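/- Let φ be an N-function with φ(x) = x²/2 for |x| ≤ 1. If ξ is a bounded random variable with E[ξ] = 0, then ξ is φ-subgaussian, i.e. there exists b ≥ 0 such that log E[exp(λξ)] ≤ φ(bλ) for all λ ∈ ℝ. -/
import Mathlib


open MeasureTheory Real Filter

theorem stmt_5 {Ω : Type*} [MeasurableSpace Ω] (μ : Measure Ω) [IsProbabilityMeasure μ]
    (φ : ℝ → ℝ)
    (heven : ∀ x, φ (-x) = φ x) (hcont : Continuous φ) (hconv : ConvexOn ℝ Set.univ φ)
    (h0 : φ 0 = 0) (hmono : StrictMonoOn φ (Set.Ici 0))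
    (hlim0 : Tendsto (fun x : ℝ => φ x / x) (nhdsWithin 0 {0}ᶜ) (nhds 0))
    (hlimtop : Tendsto (fun x : ℝ => φ x / x) atTop atTop)
    (hquad : ∀ x : ℝ, |x| ≤ 1 → φ x = x ^ 2 / 2)
    (ξ : Ω → ℝ) (hmeas : AEMeasurable ξ μ)
    (hbdd : ∃ M : ℝ, ∀ᵐ ω ∂μ, |ξ ω| ≤ M)
    (hmean : ∫ ω, ξ ω ∂μ = 0) :
    ∃ b : ℝ, 0 ≤ b ∧ ∀ l : ℝ, Real.log (∫ ω, Real.exp (l * ξ ω) ∂μ) ≤ φ (b * l) := by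
  obtain ⟨N, hN0, hbd⟩ : ∃ N : ℝ, 0 < N ∧ ∀ᵐ ω ∂μ, |ξ ω| ≤ N := by
    obtain ⟨M, hM⟩ := hbdd
    refine ⟨|M| + 1, by positivity, hM.mono fun ω h => h.trans ?_⟩
    linarith [le_abs_self M, abs_nonneg M]
  -- φ 1 = 1/2
  have hφ1 : φ 1 = 1 / 2 := by
    have := hquad 1 (by norm_num)
    norm_num at this
    linarith
  -- linear lower bound for φ on [1, ∞)
  have hlin : ∀ x : ℝ, 1 ≤ x → x / 2 ≤ φ x := by
    intro x hx
    have hx0 : 0 < x := by linarith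
    have ha' : (0:ℝ) ≤ 1 - 1/x := by
      have : 1/x ≤ 1 := by rw [div_le_one hx0]; exact hx
      linarith
    have hb' : (0:ℝ) ≤ 1/x := by positivity
    have hab' : (1 - 1/x) + 1/x = 1 := by ring
    have hc := hconv.2 (Set.mem_univ (0:ℝ)) (Set.mem_univ x) ha' hb' hab'
    simp only [smul_eq_mul, mul_zero, zero_add, h0, add_zero] at hc
    rw [one_div, inv_mul_cancel₀ hx0.ne'] at hc
    rw [hφ1] at hc
    have := mul_le_mul_of_nonneg_left hc hx0.le
    rw [← mul_assoc, mul_inv_cancel₀ hx0.ne', one_mul] at this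
    linarith
  have hξint : Integrable ξ μ := by
    refine Integrable.mono' (integrable_const N) hmeas.aestronglyMeasurable ?_
    exact hbd.mono fun ω h => by rwa [Real.norm_eq_abs]
  refine ⟨2 * N, by positivity, fun l => ?_⟩
  have hexpm : AEStronglyMeasurable (fun ω => Real.exp (l * ξ ω)) μ :=
    (Real.measurable_exp.comp_aemeasurable (hmeas.const_mul l)).aestronglyMeasurable
  have hub : ∀ᵐ ω ∂μ, Real.exp (l * ξ ω) ≤ Real.exp (|l| * N) := by
    refine hbd.mono fun ω h => Real.exp_le_exp.2 ?_
    calc l * ξ ω ≤ |l * ξ ω| := le_abs_self _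
      _ = |l| * |ξ ω| := abs_mul _ _
      _ ≤ |l| * N := by have := abs_nonneg l; nlinarith
  have hexpint : Integrable (fun ω => Real.exp (l * ξ ω)) μ := by
    refine Integrable.mono' (integrable_const (Real.exp (|l| * N))) hexpm ?_
    exact hub.mono fun ω h => by rwa [Real.norm_eq_abs, abs_of_pos (Real.exp_pos _)]
  -- positivity of mgf
  have hEpos : 0 < ∫ ω, Real.exp (l * ξ ω) ∂μ := by
    have hlb : ∀ᵐ ω ∂μ, Real.exp (-(|l| * N)) ≤ Real.exp (l * ξ ω) := by
      refine hbd.mono fun ω h => Real.exp_le_exp.2 ?_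
      have : |l * ξ ω| ≤ |l| * N := by
        rw [abs_mul]; have := abs_nonneg l; nlinarith [abs_nonneg (ξ ω)]
      linarith [neg_abs_le (l * ξ ω)]
    calc (0:ℝ) < Real.exp (-(|l| * N)) := Real.exp_pos _
      _ = ∫ _ω, Real.exp (-(|l| * N)) ∂μ := by simp
      _ ≤ ∫ ω, Real.exp (l * ξ ω) ∂μ := integral_mono_ae (integrable_const _) hexpint hlb
  -- convexity bound: E exp(lξ) ≤ cosh(l N)
  obtain ⟨c1, hc1⟩ : ∃ c1 : ℝ, c1 = (Real.exp (-(l * N)) + Real.exp (l * N)) / 2 := ⟨_, rfl⟩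
  obtain ⟨c2, hc2⟩ : ∃ c2 : ℝ,
      c2 = (Real.exp (l * N) - Real.exp (-(l * N))) / (2 * N) := ⟨_, rfl⟩
  have hkey : ∀ᵐ ω ∂μ, Real.exp (l * ξ ω) ≤ c1 + ξ ω * c2 := by
    refine hbd.mono fun ω h => ?_
    have hx1 : -N ≤ ξ ω := neg_le_of_abs_le h
    have hx2 : ξ ω ≤ N := le_of_abs_le h
    have ha : (0:ℝ) ≤ (N - ξ ω) / (2 * N) := div_nonneg (by linarith) (by positivity)
    have hb : (0:ℝ) ≤ (N + ξ ω) / (2 * N) := div_nonneg (by linarith) (by positivity)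
    have hab : (N - ξ ω) / (2 * N) + (N + ξ ω) / (2 * N) = 1 := by
      field_simp
      ring
    have hc := (convexOn_exp.2 (Set.mem_univ (-(l * N))) (Set.mem_univ (l * N)) ha hb hab)
    simp only [smul_eq_mul] at hc
    have harg : (N - ξ ω) / (2 * N) * (-(l * N)) + (N + ξ ω) / (2 * N) * (l * N)
        = l * ξ ω := by field_simp; ring
    rw [harg] at hc
    refine hc.trans (le_of_eq ?_)
    rw [hc1, hc2]
    field_simp
    ring
  have hint2 : Integrable (fun ω => c1 + ξ ω * c2) μ :=
    (integrable_const c1).add (hξint.mul_const c2)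
  have hE1 : ∫ ω, Real.exp (l * ξ ω) ∂μ ≤ Real.cosh (l * N) := by
    calc ∫ ω, Real.exp (l * ξ ω) ∂μ ≤ ∫ ω, (c1 + ξ ω * c2) ∂μ :=
          integral_mono_ae hexpint hint2 hkey
      _ = c1 + (∫ ω, ξ ω ∂μ) * c2 := by
          rw [integral_add (integrable_const c1) (hξint.mul_const c2), integral_const,
            integral_mul_const]
          simp
      _ = c1 := by rw [hmean]; ring
      _ = Real.cosh (l * N) := by rw [Real.cosh_eq, hc1]; ring
  have hE2 : ∫ ω, Real.exp (l * ξ ω) ∂μ ≤ Real.exp (|l| * N) := by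
    calc ∫ ω, Real.exp (l * ξ ω) ∂μ ≤ ∫ _ω, Real.exp (|l| * N) ∂μ :=
          integral_mono_ae hexpint (integrable_const _) hub
      _ = Real.exp (|l| * N) := by simp
  have habs : φ (2 * N * l) = φ |2 * N * l| := by
    rcases abs_cases (2 * N * l) with ⟨h1, _⟩ | ⟨h1, _⟩
    · rw [h1]
    · rw [h1, heven]
  rw [Real.log_le_iff_le_exp hEpos]
  rcases le_or_gt (|2 * N * l|) 1 with hcase | hcase
  · -- small: quadratic regime
    have hq : φ (2 * N * l) = (2 * N * l) ^ 2 / 2 := hquad _ hcase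
    refine hE1.trans ((Real.cosh_le_exp_half_sq _).trans (Real.exp_le_exp.2 ?_))
    rw [hq]; nlinarith [sq_nonneg (l * N)]
  · -- large: linear regime
    have hge : |2 * N * l| / 2 ≤ φ (2 * N * l) := by
      rw [habs]; exact hlin _ hcase.le
    refine hE2.trans (Real.exp_le_exp.2 ?_)
    have habs2 : |2 * N * l| = 2 * N * |l| := by
      rw [abs_mul, abs_of_pos (by positivity : (0:ℝ) < 2 * N)]
    rw [habs2] at hge
    nlinarith [hge]
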